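/- If F is a continuous CDF, then the distribution of the Kolmogorov–Smirnov statistic D_n = sup_y |F̂ₙ(y) − F(y)| does not depend on F; it equals the distribution of sup_{u∈[0,1]} |Ĝₙ(u) − u| where Ĝₙ is the empirical CDF of n i.i.d. Uniform[0,1] variables. -/

import Mathlib

open MeasureTheory ProbabilityTheory
open scoped Classical
open Set Filter Topology

noncomputable def KSecdf (n : ℕ) (v : Fin n → ℝ) (t : ℝ) : ℝ :=
  (∑ i, if v i ≤ t then (1 : ℝ) else 0) / n

lemma KSecdf_nonneg (n : ℕ) (v : Fin n → ℝ) (t : ℝ) : 0 ≤ KSecdf n v t := by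
  unfold KSecdf
  apply div_nonneg _ (Nat.cast_nonneg n)
  exact Finset.sum_nonneg fun i _ => by positivity

lemma KSecdf_le_one {n : ℕ} (hn : 0 < n) (v : Fin n → ℝ) (t : ℝ) : KSecdf n v t ≤ 1 := by
  unfold KSecdf
  rw [div_le_one (by exact_mod_cast hn)]
  calc (∑ i, if v i ≤ t then (1:ℝ) else 0) ≤ ∑ _i : Fin n, (1:ℝ) :=
        Finset.sum_le_sum fun i _ => by split <;> norm_num
    _ = n := by simp

lemma KSecdf_mono_cond {n : ℕ} {v w : Fin n → ℝ} {s t : ℝ}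
    (h : ∀ i, v i ≤ s → w i ≤ t) : KSecdf n v s ≤ KSecdf n w t := by
  unfold KSecdf
  have hnpos : (0:ℝ) ≤ n := Nat.cast_nonneg n
  refine div_le_div_of_nonneg_right ?_ hnpos
  refine Finset.sum_le_sum fun i _ => ?_
  by_cases hv : v i ≤ s
  · simp [hv, h i hv]
  · simp only [hv, if_false]; split <;> norm_num

lemma KSecdf_congr_cond {n : ℕ} {v w : Fin n → ℝ} {s t : ℝ}
    (h : ∀ i, v i ≤ s ↔ w i ≤ t) : KSecdf n v s = KSecdf n w t := by
  unfold KSecdf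
  congr 1
  exact Finset.sum_congr rfl fun i _ => by by_cases hv : v i ≤ s <;> simp [hv, (h i).symm, hv, ← h i]

lemma KSabs_bound {n : ℕ} (hn : 0 < n) (v : Fin n → ℝ) (t c : ℝ) (h0 : 0 ≤ c) (h1 : c ≤ 1) :
    |KSecdf n v t - c| ≤ 2 := by
  have := KSecdf_nonneg n v t
  have := KSecdf_le_one hn v t
  rw [abs_sub_le_iff]; constructor <;> linarith

/-- Structure of sublevel sets of a continuous monotone function. -/
lemma KSsublevel_struct (F : ℝ → ℝ) (hmono : Monotone F) (hcont : Continuous F) (t : ℝ) :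
    {y | F y ≤ t} = ∅ ∨ {y | F y ≤ t} = univ ∨
      ∃ y0, {y | F y ≤ t} = Iic y0 ∧ F y0 = t := by
  set S := {y | F y ≤ t} with hS
  by_cases hne : S.Nonempty
  · by_cases hbdd : BddAbove S
    · right; right
      have hclosed : IsClosed S := isClosed_le hcont continuous_const
      have hmem : sSup S ∈ S := hclosed.csSup_mem hne hbdd
      refine ⟨sSup S, ?_, ?_⟩
      · ext y
        constructor
        · intro hy; exact le_csSup hbdd hy
        · intro hy; exact le_trans (hmono hy) hmem
      · refine le_antisymm hmem ?_
        have htend : Tendsto F (𝓝[>] (sSup S)) (𝓝 (F (sSup S))) :=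
          (hcont.tendsto _).mono_left nhdsWithin_le_nhds
        refine ge_of_tendsto htend ?_
        filter_upwards [self_mem_nhdsWithin] with y hy
        by_contra hlt
        push_neg at hlt
        exact absurd (le_csSup hbdd hlt.le) (not_le.mpr hy)
    · right; left
      ext y
      simp only [mem_univ, iff_true]
      obtain ⟨z, hz, hyz⟩ := (not_bddAbove_iff.mp hbdd) y
      exact le_trans (hmono hyz.le) hz
  · left; exact not_nonempty_iff_eq_empty.mp hne

lemma KSuniform_prob : IsProbabilityMeasure (volume.restrict (Icc (0:ℝ) 1)) := by
  constructor
  rw [Measure.restrict_apply_univ, Real.volume_Icc]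
  norm_num

/-- Probability integral transform. -/
lemma KS_PIT (μ : Measure ℝ) [IsProbabilityMeasure μ] (hcont : Continuous (cdf μ)) :
    Measure.map (cdf μ) μ = volume.restrict (Icc (0:ℝ) 1) := by
  haveI := KSuniform_prob
  haveI : IsProbabilityMeasure (Measure.map (cdf μ) μ) :=
    Measure.isProbabilityMeasure_map hcont.measurable.aemeasurable
  refine Measure.ext_of_Iic _ _ fun t => ?_
  rw [Measure.map_apply hcont.measurable measurableSet_Iic,
    Measure.restrict_apply measurableSet_Iic]
  have hset : Iic t ∩ Icc (0:ℝ) 1 = Icc 0 (min t 1) := by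
    ext x
    simp only [mem_inter_iff, mem_Iic, mem_Icc, le_min_iff]
    constructor
    · rintro ⟨h1, h2, h3⟩; exact ⟨h2, h1, h3⟩
    · rintro ⟨h1, h2, h3⟩; exact ⟨h2, h1, h3⟩
  rw [hset, Real.volume_Icc]
  have hpre : cdf μ ⁻¹' Iic t = {y | cdf μ y ≤ t} := rfl
  rcases KSsublevel_struct (cdf μ) (monotone_cdf μ) hcont t with h | h | ⟨y0, hS, hF⟩
  · rw [hpre, h, measure_empty]
    have ht : t ≤ 0 := by
      refine ge_of_tendsto' (tendsto_cdf_atBot μ) fun y => ?_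
      by_contra hlt
      push_neg at hlt
      have := Set.eq_empty_iff_forall_notMem.mp h y
      exact this hlt.le
    symm
    rw [ENNReal.ofReal_eq_zero]
    have : min t 1 ≤ t := min_le_left _ _
    linarith
  · rw [hpre, h, measure_univ]
    have ht : 1 ≤ t := by
      refine le_of_tendsto' (tendsto_cdf_atTop μ) fun y => ?_
      have : y ∈ {y | cdf μ y ≤ t} := h ▸ mem_univ y
      exact this
    rw [min_eq_right ht, sub_zero, ENNReal.ofReal_one]
  · rw [hpre, hS, ← ofReal_cdf μ y0, hF]
    have ht1 : t ≤ 1 := hF ▸ cdf_le_one μ y0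
    rw [min_eq_left ht1, sub_zero]

/-- Joint law of independent random variables is the product of marginals. -/
lemma KSmap_tuple_eq_pi {Ω : Type*} [MeasureSpace Ω] [IsProbabilityMeasure (ℙ : Measure Ω)]
    {n : ℕ} (f : Fin n → Ω → ℝ) (hmeas : ∀ i, Measurable (f i))
    (hindep : iIndepFun f ℙ) :
    Measure.map (fun ω i => f i ω) ℙ = Measure.pi (fun i => Measure.map (f i) ℙ) := by
  haveI : ∀ i, IsProbabilityMeasure (Measure.map (f i) ℙ) :=
    fun i => Measure.isProbabilityMeasure_map (hmeas i).aemeasurable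
  haveI : ∀ i, SigmaFinite (Measure.map (f i) ℙ) := fun i => inferInstance
  refine (Measure.pi_eq (μ := fun i => Measure.map (f i) ℙ) fun s hs => ?_).symm
  rw [Measure.map_apply (measurable_pi_lambda _ hmeas) (MeasurableSet.univ_pi hs)]
  have hpre : (fun ω i => f i ω) ⁻¹' (Set.pi univ s) = ⋂ i ∈ Finset.univ, f i ⁻¹' s i := by
    ext ω; simp [Set.mem_pi]
  rw [hpre]
  rw [hindep.measure_inter_preimage_eq_mul Finset.univ (fun i _ => hs i)]
  exact Finset.prod_congr rfl fun i _ => (Measure.map_apply (hmeas i) (hs i)).symm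


noncomputable def KSstat (n : ℕ) (v : Fin n → ℝ) : ℝ :=
  ⨆ u : Set.Icc (0:ℝ) 1, |KSecdf n v u - (u : ℝ)|

instance : Nonempty (Set.Icc (0:ℝ) 1) := ⟨⟨0, by norm_num⟩⟩
instance : Nonempty (Set.Icc (0:ℚ) 1) := ⟨⟨0, by norm_num⟩⟩

lemma KSbdd_stat {n : ℕ} (hn : 0 < n) (v : Fin n → ℝ) :
    BddAbove (range fun u : Set.Icc (0:ℝ) 1 => |KSecdf n v u - (u : ℝ)|) := by
  refine ⟨2, ?_⟩
  rintro _ ⟨u, rfl⟩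
  exact KSabs_bound hn v u u u.2.1 u.2.2

lemma KSbdd_rat {n : ℕ} (hn : 0 < n) (v : Fin n → ℝ) :
    BddAbove (range fun q : Set.Icc (0:ℚ) 1 => |KSecdf n v (q : ℝ) - (q : ℝ)|) := by
  refine ⟨2, ?_⟩
  rintro _ ⟨q, rfl⟩
  exact KSabs_bound hn v q q (by exact_mod_cast q.2.1) (by exact_mod_cast q.2.2)

lemma KSstat_nonneg {n : ℕ} (hn : 0 < n) (v : Fin n → ℝ) : 0 ≤ KSstat n v := by
  refine le_trans (abs_nonneg (KSecdf n v 0 - 0)) ?_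
  exact le_ciSup (KSbdd_stat hn v) ⟨0, by norm_num⟩

lemma KSstat_eq_rat {n : ℕ} (hn : 0 < n) (v : Fin n → ℝ) :
    KSstat n v = ⨆ q : Set.Icc (0:ℚ) 1, |KSecdf n v (q : ℝ) - (q : ℝ)| := by
  apply le_antisymm
  · refine ciSup_le fun u => ?_
    obtain ⟨u, hu0, hu1⟩ := u
    simp only
    refine le_of_forall_pos_le_add fun ε hε => ?_
    by_cases hu : u = 1
    · subst hu
      have : |KSecdf n v ((1:ℚ):ℝ) - ((1:ℚ):ℝ)| ≤
          ⨆ q : Set.Icc (0:ℚ) 1, |KSecdf n v (q : ℝ) - (q : ℝ)| :=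
        le_ciSup (KSbdd_rat hn v) ⟨1, by norm_num⟩
      push_cast at this
      linarith
    · have hu1' : u < 1 := lt_of_le_of_ne hu1 hu
      set A : Finset ℝ :=
        insert 1 (insert (u + ε) ((Finset.univ.filter fun i => u < v i).image v)) with hA
      have hAne : A.Nonempty := ⟨1, Finset.mem_insert_self _ _⟩
      set c := A.min' hAne with hc
      have hcu : u < c := by
        rw [Finset.lt_min'_iff]
        intro b hb
        simp only [hA, Finset.mem_insert, Finset.mem_image, Finset.mem_filter,
          Finset.mem_univ, true_and] at hb
        rcases hb with rfl | rfl | ⟨i, hi, rfl⟩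
        · exact hu1'
        · linarith
        · exact hi
      obtain ⟨q, hq1, hq2⟩ := exists_rat_btwn hcu
      have hq0 : (0:ℝ) ≤ (q:ℝ) := le_trans hu0 hq1.le
      have hqle1 : (q:ℝ) ≤ 1 :=
        le_trans hq2.le (Finset.min'_le A 1 (Finset.mem_insert_self _ _))
      have hqeps : (q:ℝ) ≤ u + ε :=
        le_trans hq2.le (Finset.min'_le A (u + ε)
          (Finset.mem_insert_of_mem (Finset.mem_insert_self _ _)))
      have hsame : KSecdf n v (q:ℝ) = KSecdf n v u := by
        refine KSecdf_congr_cond fun i => ⟨?_, fun h => h.trans hq1.le⟩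
        intro hvq
        by_contra hvu
        push_neg at hvu
        have : c ≤ v i := Finset.min'_le A (v i) (by
          simp only [hA, Finset.mem_insert, Finset.mem_image, Finset.mem_filter,
            Finset.mem_univ, true_and]
          exact Or.inr (Or.inr ⟨i, hvu, rfl⟩))
        linarith
      have hterm : |KSecdf n v (q:ℝ) - (q:ℝ)| ≤
          ⨆ p : Set.Icc (0:ℚ) 1, |KSecdf n v (p : ℝ) - (p : ℝ)| :=
        le_ciSup (KSbdd_rat hn v) ⟨q, ⟨by exact_mod_cast hq0, by exact_mod_cast hqle1⟩⟩
      have htri : |KSecdf n v u - u| ≤ |KSecdf n v (q:ℝ) - (q:ℝ)| + |(q:ℝ) - u| := by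
        rw [hsame]
        exact abs_sub_le _ _ _ |>.trans (by rw [abs_sub_comm ((q:ℝ)) u]) |>.trans_eq rfl
      have habs : |(q:ℝ) - u| ≤ ε := by
        rw [abs_of_nonneg (by linarith)]
        linarith
      linarith
  · refine ciSup_le fun q => ?_
    exact le_ciSup (KSbdd_stat hn v)
      ⟨(q:ℝ), ⟨by exact_mod_cast q.2.1, by exact_mod_cast q.2.2⟩⟩

lemma KSstat_measurable {n : ℕ} (hn : 0 < n) : Measurable (KSstat n) := by
  have h : KSstat n = fun v => ⨆ q : Set.Icc (0:ℚ) 1, |KSecdf n v (q : ℝ) - (q : ℝ)| :=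
    funext (KSstat_eq_rat hn)
  rw [h]
  refine Measurable.iSup fun q => ?_
  have hm : Measurable fun v : Fin n → ℝ => KSecdf n v (q:ℝ) := by
    unfold KSecdf
    apply Measurable.div_const
    refine Finset.measurable_sum _ fun i _ => ?_
    exact Measurable.ite (measurableSet_le (measurable_pi_apply i) measurable_const)
      measurable_const measurable_const
  exact (hm.sub_const _).abs

lemma KSsup_eq {n : ℕ} (hn : 0 < n) (F : ℝ → ℝ) (hmono : Monotone F) (hcont : Continuous F)
    (h0 : ∀ y, 0 ≤ F y) (h1 : ∀ y, F y ≤ 1)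
    (hbot : Tendsto F atBot (𝓝 0)) (htop : Tendsto F atTop (𝓝 1)) (a : Fin n → ℝ) :
    (⨆ y : ℝ, |KSecdf n a y - F y|) = KSstat n (fun i => F (a i)) := by
  set v : Fin n → ℝ := fun i => F (a i) with hv
  have hbddY : BddAbove (range fun y : ℝ => |KSecdf n a y - F y|) := by
    refine ⟨2, ?_⟩
    rintro _ ⟨y, rfl⟩
    exact KSabs_bound hn a y (F y) (h0 y) (h1 y)
  have hYnonneg : 0 ≤ ⨆ y : ℝ, |KSecdf n a y - F y| :=
    le_trans (abs_nonneg _) (le_ciSup hbddY 0)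
  apply le_antisymm
  · refine ciSup_le fun y => ?_
    set u := F y with hu
    have hu0 : 0 ≤ u := h0 y
    have hu1 : u ≤ 1 := h1 y
    set s := KSecdf n a y with hs
    rcases le_or_gt u s with hcase | hcase
    · have hle : s ≤ KSecdf n v u := KSecdf_mono_cond fun i hi => hmono hi
      have hterm : |KSecdf n v u - u| ≤ KSstat n v := le_ciSup (KSbdd_stat hn v) ⟨u, hu0, hu1⟩
      have h2 : KSecdf n v u - u ≤ |KSecdf n v u - u| := le_abs_self _
      rw [abs_of_nonneg (by linarith)]
      linarith
    · rw [abs_of_nonpos (by linarith)]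
      refine le_of_forall_pos_le_add fun ε hε => ?_
      by_cases hu0' : u = 0
      · exfalso
        have := KSecdf_nonneg n a y
        rw [hu0'] at hcase
        rw [hs] at hcase
        linarith
      · have hupos : 0 < u := lt_of_le_of_ne hu0 (Ne.symm hu0')
        set ε' := min ε u with hε'def
        have hε' : 0 < ε' := lt_min hε hupos
        have hε'u : ε' ≤ u := min_le_right _ _
        have hε'ε : ε' ≤ ε := min_le_left _ _
        set B : Finset ℝ := insert (u - ε') ((Finset.univ.filter fun i => v i < u).image v)
          with hB
        have hBne : B.Nonempty := ⟨u - ε', Finset.mem_insert_self _ _⟩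
        set m := B.max' hBne with hm
        have hmu : m < u := by
          rw [Finset.max'_lt_iff]
          intro b hb
          simp only [hB, Finset.mem_insert, Finset.mem_image, Finset.mem_filter,
            Finset.mem_univ, true_and] at hb
          rcases hb with rfl | ⟨i, hi, rfl⟩
          · linarith
          · exact hi
        have hm_eps : u - ε' ≤ m := Finset.le_max' _ _ (Finset.mem_insert_self _ _)
        have hm0 : 0 ≤ m := le_trans (by linarith) hm_eps
        have hstrict : ∀ i, v i ≤ m ↔ v i < u := fun i =>
          ⟨fun h => lt_of_le_of_lt h hmu,
           fun h => Finset.le_max' _ _ (by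
            simp only [hB, Finset.mem_insert, Finset.mem_image, Finset.mem_filter,
              Finset.mem_univ, true_and]
            exact Or.inr ⟨i, h, rfl⟩)⟩
        have hds : KSecdf n v m ≤ s := by
          refine KSecdf_mono_cond fun i hi => ?_
          have hvi : v i < u := (hstrict i).mp hi
          by_contra hay
          push_neg at hay
          exact absurd (hmono hay.le) (not_le.mpr hvi)
        have hterm : |KSecdf n v m - m| ≤ KSstat n v :=
          le_ciSup (KSbdd_stat hn v) ⟨m, hm0, by linarith⟩
        have habs : m - KSecdf n v m ≤ |KSecdf n v m - m| := by
          rw [abs_sub_comm]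
          exact le_abs_self _
        linarith
  · refine ciSup_le fun u => ?_
    obtain ⟨u, hu0, hu1⟩ := u
    simp only
    rcases KSsublevel_struct F hmono hcont u with h | h | ⟨y0, hS, hF⟩
    · have hforall : ∀ z, ¬ F z ≤ u := fun z => eq_empty_iff_forall_notMem.mp h z
      have hvz : ∀ i, ¬ (v i ≤ u) := fun i => hforall (a i)
      have hzero : KSecdf n v u = 0 := by
        simp [KSecdf, hvz]
      have hu0' : u ≤ 0 := ge_of_tendsto' hbot fun z => (not_le.mp (hforall z)).le
      have huz : u = 0 := le_antisymm hu0' hu0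
      rw [hzero, huz]
      simpa using hYnonneg
    · have hall : ∀ z, F z ≤ u := fun z => (h ▸ mem_univ z : z ∈ {y | F y ≤ u})
      have h1u : 1 ≤ u := le_of_tendsto' htop hall
      have hvall : ∀ i, v i ≤ u := fun i => hall (a i)
      have hone : KSecdf n v u = 1 := by
        simp only [KSecdf, hvall, if_true]
        rw [Finset.sum_const, Finset.card_univ, Fintype.card_fin, nsmul_eq_mul, mul_one,
          div_self (by exact_mod_cast hn.ne' : (n:ℝ) ≠ 0)]
      have hu1' : u = 1 := le_antisymm hu1 h1u
      rw [hone, hu1']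
      simpa using hYnonneg
    · have hiff : ∀ i, v i ≤ u ↔ a i ≤ y0 := fun i =>
        ⟨fun h' => by
          have hmem : a i ∈ {y | F y ≤ u} := h'
          rw [hS] at hmem
          exact hmem,
         fun h' => hF ▸ hmono h'⟩
      rw [KSecdf_congr_cond hiff, ← hF]
      exact le_ciSup hbddY y0

/-- Distribution-freeness of the Kolmogorov–Smirnov statistic: if `F` is a continuous CDF,
the distribution of `D_n = sup_y |F̂ₙ(y) − F(y)|` does not depend on `F`; it equals the
distribution of `sup_{u ∈ [0,1]} |Ĝₙ(u) − u|` where `Ĝₙ` is the empirical CDF of `n` i.i.d.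
Uniform[0,1] random variables. -/
theorem ks_distribution_free {Ω Ω' : Type*} [MeasureSpace Ω] [MeasureSpace Ω']
    [IsProbabilityMeasure (ℙ : Measure Ω)] [IsProbabilityMeasure (ℙ : Measure Ω')]
    {n : ℕ} (hn : 0 < n)
    (Y : Fin n → Ω → ℝ) (hYmeas : ∀ i, Measurable (Y i))
    (hYindep : iIndepFun Y ℙ)
    (F : ℝ → ℝ) (hident : ∀ i y, (ℙ {ω | Y i ω ≤ y}).toReal = F y)
    (hcont : Continuous F)
    (U : Fin n → Ω' → ℝ) (hUmeas : ∀ i, Measurable (U i))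
    (hUindep : iIndepFun U ℙ)
    (hUunif : ∀ i, Measure.map (U i) ℙ = volume.restrict (Set.Icc (0 : ℝ) 1)) :
    Measure.map
        (fun ω => ⨆ y : ℝ, |(∑ i, if Y i ω ≤ y then (1 : ℝ) else 0) / n - F y|) ℙ =
      Measure.map
        (fun ω' => ⨆ u : Set.Icc (0 : ℝ) 1,
          |(∑ i, if U i ω' ≤ (u : ℝ) then (1 : ℝ) else 0) / n - (u : ℝ)|) ℙ := by
  have i0 : Fin n := ⟨0, hn⟩
  set μ : Fin n → Measure ℝ := fun i => Measure.map (Y i) ℙ with hμ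
  haveI : ∀ i, IsProbabilityMeasure (μ i) :=
    fun i => Measure.isProbabilityMeasure_map (hYmeas i).aemeasurable
  have hFcdf : ∀ i, F = (cdf (μ i) : ℝ → ℝ) := by
    intro i
    funext y
    rw [cdf_eq_real, measureReal_def, hμ]
    simp only
    rw [Measure.map_apply (hYmeas i) measurableSet_Iic]
    exact (hident i y).symm
  have hmono : Monotone F := by rw [hFcdf i0]; exact monotone_cdf _
  have h0 : ∀ y, 0 ≤ F y := by rw [hFcdf i0]; exact cdf_nonneg _
  have h1 : ∀ y, F y ≤ 1 := by rw [hFcdf i0]; exact cdf_le_one _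
  have hbot : Tendsto F atBot (𝓝 0) := by rw [hFcdf i0]; exact tendsto_cdf_atBot _
  have htop : Tendsto F atTop (𝓝 1) := by rw [hFcdf i0]; exact tendsto_cdf_atTop _
  have hPIT : ∀ i, Measure.map F (μ i) = volume.restrict (Icc (0:ℝ) 1) := by
    intro i
    rw [hFcdf i]
    exact KS_PIT (μ i) (by rw [← hFcdf i]; exact hcont)
  have hL : (fun ω => ⨆ y : ℝ, |(∑ i, if Y i ω ≤ y then (1:ℝ) else 0) / n - F y|)
      = KSstat n ∘ (fun ω i => F (Y i ω)) := by
    funext ω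
    exact KSsup_eq hn F hmono hcont h0 h1 hbot htop (fun i => Y i ω)
  have hR : (fun ω' => ⨆ u : Set.Icc (0 : ℝ) 1,
        |(∑ i, if U i ω' ≤ (u : ℝ) then (1 : ℝ) else 0) / n - (u : ℝ)|)
      = KSstat n ∘ (fun ω' i => U i ω') := rfl
  rw [hL, hR]
  have hmeasFY : Measurable (fun ω i => F (Y i ω)) :=
    measurable_pi_lambda _ fun i => hcont.measurable.comp (hYmeas i)
  have hmeasU : Measurable (fun ω' i => U i ω') := measurable_pi_lambda _ fun i => hUmeas i
  rw [← Measure.map_map (KSstat_measurable hn) hmeasFY,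
    ← Measure.map_map (KSstat_measurable hn) hmeasU]
  have h1' : Measure.map (fun ω i => F (Y i ω)) ℙ
      = Measure.pi (fun _ => volume.restrict (Icc (0:ℝ) 1)) := by
    have hj := KSmap_tuple_eq_pi (fun i => F ∘ Y i)
      (fun i => hcont.measurable.comp (hYmeas i))
      (hYindep.comp (fun _ => F) (fun _ => hcont.measurable))
    rw [show (fun ω i => F (Y i ω)) = (fun ω i => (F ∘ Y i) ω) from rfl, hj]
    congr 1
    funext i
    rw [← Measure.map_map hcont.measurable (hYmeas i)]
    exact hPIT i
  have h2' : Measure.map (fun ω' i => U i ω') ℙ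
      = Measure.pi (fun _ => volume.restrict (Icc (0:ℝ) 1)) := by
    rw [KSmap_tuple_eq_pi U hUmeas hUindep]
    congr 1
    funext i
    exact hUunif i
  rw [h1', h2']
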